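/- Let M be a symmetric real n×n matrix. Consider the linear system As = b in nonnegative variables s ∈ ℝ^{4n}, where A ∈ ℝ^{2n×4n} is the block matrix with first block row (−M, −I, I, 0) and second block row (I, 0, 0, I), and b = (0, e)ᵀ ∈ ℝ^{2n} (e the all-ones vector in ℝⁿ). Then there exist x̄, ȳ, ū, v̄ ∈ ℝⁿ with nonnegative entries such that s = (x̄, ȳ, ū, v̄)ᵀ is a basic feasible solution of this system (i.e. As = b, s ≥ 0, and the columns A_j of A with s_j > 0 are linearly independent), the complementarity condition ūᵀx̄ + v̄ᵀȳ = 0 holds, and x̄ minimizes Q(x) = xᵀMx over [0,1]ⁿ. -/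

import Mathlib

open Matrix Finset

namespace Stmt3Aux

variable {n : ℕ} (M : Matrix (Fin n) (Fin n) ℝ)

def Cube (x : Fin n → ℝ) : Prop := ∀ i, x i ∈ Set.Icc (0:ℝ) 1

def Good (x : Fin n → ℝ) : Prop :=
  Cube x ∧ ∀ z, Cube z → x ⬝ᵥ M *ᵥ x ≤ z ⬝ᵥ M *ᵥ z

variable {M}

lemma qexp (hsym : M.IsSymm) (x a : Fin n → ℝ) :
    (x + a) ⬝ᵥ M *ᵥ (x + a)
      = x ⬝ᵥ M *ᵥ x + 2 * (a ⬝ᵥ (M *ᵥ x)) + a ⬝ᵥ M *ᵥ a := by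
  have hxa : x ⬝ᵥ M *ᵥ a = a ⬝ᵥ M *ᵥ x := by
    rw [Matrix.dotProduct_mulVec, ← Matrix.mulVec_transpose, hsym.eq, dotProduct_comm]
  rw [Matrix.mulVec_add, dotProduct_add, add_dotProduct, add_dotProduct,
    hxa]
  ring

lemma exists_good : ∃ x, Good M x := by
  have hK : IsCompact (Set.univ.pi fun _ : Fin n => Set.Icc (0:ℝ) 1) :=
    isCompact_univ_pi fun _ => isCompact_Icc
  have hc : Continuous fun x : Fin n → ℝ => x ⬝ᵥ M *ᵥ x := by
    simp only [dotProduct, Matrix.mulVec]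
    exact continuous_finset_sum _ fun i _ => (continuous_apply i).mul
      (continuous_finset_sum _ fun j _ => continuous_const.mul (continuous_apply j))
  obtain ⟨x, hx, hmin⟩ := hK.exists_isMinOn
    ⟨0, fun i _ => Set.mem_Icc.mpr ⟨le_rfl, zero_le_one⟩⟩ hc.continuousOn
  refine ⟨x, fun i => hx i (Set.mem_univ i), fun z hz => hmin ?_⟩
  exact fun i _ => hz i

lemma dir (hx : Good M x) (hsym : M.IsSymm) (i : Fin n) (t : ℝ)
    (h0 : 0 ≤ x i + t) (h1 : x i + t ≤ 1) :
    0 ≤ 2 * t * ((M *ᵥ x) i) + t ^ 2 * M i i := by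
  set a : Fin n → ℝ := fun j => if j = i then t else 0 with ha
  have hz : Cube (x + a) := by
    intro j
    by_cases hj : j = i
    · subst hj
      simpa [ha] using And.intro h0 h1
    · have : a j = 0 := by simp [ha, hj]
      simpa [this] using hx.1 j
  have hle := hx.2 _ hz
  rw [qexp hsym] at hle
  have h2 : a ⬝ᵥ (M *ᵥ x) = t * (M *ᵥ x) i := by
    simp [ha, dotProduct, ite_mul]
  have hMa : M *ᵥ a = fun k => M k i * t := by
    funext k
    simp [ha, Matrix.mulVec, dotProduct, mul_ite]
  have h3 : a ⬝ᵥ M *ᵥ a = t ^ 2 * M i i := by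
    rw [hMa]
    simp [hMa, dotProduct, ha, ite_mul]
    ring
  rw [h2, h3] at hle
  linarith

lemma K2 (hx : Good M x) (hsym : M.IsSymm) (i : Fin n) (h : x i < 1) :
    0 ≤ (M *ᵥ x) i := by
  by_contra hg
  push_neg at hg
  set g := (M *ᵥ x) i with hgdef
  set t : ℝ := min (1 - x i) (-g / (|M i i| + 1)) with htdef
  have hMpos : (0:ℝ) < |M i i| + 1 := by positivity
  have ht0 : 0 < t := lt_min (by linarith) (div_pos (by linarith) hMpos)
  have ht1 : t ≤ 1 - x i := min_le_left _ _
  have ht2 : t ≤ -g / (|M i i| + 1) := min_le_right _ _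
  have ht2' : t * (|M i i| + 1) ≤ -g := by
    rw [← le_div_iff₀ hMpos]; exact ht2
  have hMii : M i i ≤ |M i i| := le_abs_self _
  have hd := dir hx hsym i t (by have := (hx.1 i).1; linarith) (by linarith)
  have hneg : 2 * t * g + t ^ 2 * M i i < 0 := by
    nlinarith [ht0, ht2', hMii, sq_nonneg t]
  linarith

lemma K1 (hx : Good M x) (hsym : M.IsSymm) (i : Fin n) (h : 0 < x i) :
    (M *ᵥ x) i ≤ 0 := by
  by_contra hg
  push_neg at hg
  set g := (M *ᵥ x) i with hgdef
  set t : ℝ := min (x i) (g / (|M i i| + 1)) with htdef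
  have hMpos : (0:ℝ) < |M i i| + 1 := by positivity
  have ht0 : 0 < t := lt_min h (div_pos hg hMpos)
  have ht1 : t ≤ x i := min_le_left _ _
  have ht2' : t * (|M i i| + 1) ≤ g := by
    rw [← le_div_iff₀ hMpos]; exact min_le_right _ _
  have hMii : M i i ≤ |M i i| := le_abs_self _
  have hd := dir hx hsym i (-t) (by linarith) (by have := (hx.1 i).2; linarith)
  have hneg : 2 * (-t) * g + (-t) ^ 2 * M i i < 0 := by
    nlinarith [ht0, ht2', hMii]
  linarith

lemma KFrac (hx : Good M x) (hsym : M.IsSymm) (i : Fin n) (h0 : 0 < x i) (h1 : x i < 1) :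
    (M *ᵥ x) i = 0 :=
  le_antisymm (K1 hx hsym i h0) (K2 hx hsym i h1)


noncomputable def Frac (x : Fin n → ℝ) : Finset (Fin n) :=
  univ.filter fun i => 0 < x i ∧ x i < 1

def A0 (M : Matrix (Fin n) (Fin n) ℝ) :
    Matrix (Fin n ⊕ Fin n) ((Fin n ⊕ Fin n) ⊕ (Fin n ⊕ Fin n)) ℝ :=
  Matrix.fromBlocks
    (Matrix.fromCols (-M) (-(1 : Matrix (Fin n) (Fin n) ℝ)))
    (Matrix.fromCols (1 : Matrix (Fin n) (Fin n) ℝ) 0)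
    (Matrix.fromCols (1 : Matrix (Fin n) (Fin n) ℝ) 0)
    (Matrix.fromCols 0 (1 : Matrix (Fin n) (Fin n) ℝ))

noncomputable def sv (M : Matrix (Fin n) (Fin n) ℝ) (x : Fin n → ℝ) :
    (Fin n ⊕ Fin n) ⊕ (Fin n ⊕ Fin n) → ℝ :=
  Sum.elim (Sum.elim x (fun i => max (-((M *ᵥ x) i)) 0))
    (Sum.elim (fun i => max ((M *ᵥ x) i) 0) (fun i => 1 - x i))

lemma indep_or_descend {x : Fin n → ℝ} (hx : Good M x) (hsym : M.IsSymm) :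
    (LinearIndependent ℝ fun j : {j // 0 < sv M x j} => (A0 M).transpose j.1) ∨
      ∃ x', Good M x' ∧ (Frac x').card < (Frac x).card := by
  by_cases hli : LinearIndependent ℝ fun j : {j // 0 < sv M x j} => (A0 M).transpose j.1
  · exact Or.inl hli
  right
  rw [Fintype.not_linearIndependent_iff] at hli
  obtain ⟨g, hgsum, j0, hgj0⟩ := hli
  set G : ((Fin n ⊕ Fin n) ⊕ (Fin n ⊕ Fin n)) → ℝ :=
    fun j => if hj : 0 < sv M x j then g ⟨j, hj⟩ else 0 with hGdef
  have hG0 : ∀ j, ¬ 0 < sv M x j → G j = 0 := fun j hj => dif_neg hj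
  have hGpos : ∀ (j) (hj : 0 < sv M x j), G j = g ⟨j, hj⟩ := fun j hj => dif_pos hj
  -- the dependency gives A0 M *ᵥ G = 0
  have hAG : (A0 M) *ᵥ G = 0 := by
    funext r
    have hr := congrFun hgsum r
    simp only [Finset.sum_apply, Pi.smul_apply, Matrix.transpose_apply, smul_eq_mul,
      Pi.zero_apply] at hr
    show (∑ j, A0 M r j * G j) = 0
    rw [← Finset.sum_filter_add_sum_filter_not univ (fun j => 0 < sv M x j)]
    have h2 : ∑ j ∈ univ.filter (fun j => ¬ 0 < sv M x j), A0 M r j * G j = 0 :=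
      Finset.sum_eq_zero fun j hj => by
        rw [hG0 j (Finset.mem_filter.mp hj).2, mul_zero]
    have h1 : ∑ j ∈ univ.filter (fun j => 0 < sv M x j), A0 M r j * G j
        = ∑ j : {j // 0 < sv M x j}, A0 M r j.1 * G j.1 :=
      Finset.sum_subtype _ (by simp) _
    have h3 : ∀ j : {j // 0 < sv M x j}, A0 M r j.1 * G j.1 = g j * A0 M r j.1 := fun j => by
      rw [hGpos j.1 j.2, mul_comm]
    rw [h1, h2, add_zero, Finset.sum_congr rfl (fun j _ => h3 j)]
    exact hr
  set a : Fin n → ℝ := fun i => G (Sum.inl (Sum.inl i)) with hadef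
  set bb : Fin n → ℝ := fun i => G (Sum.inl (Sum.inr i)) with hbbdef
  set c : Fin n → ℝ := fun i => G (Sum.inr (Sum.inl i)) with hcdef
  set d : Fin n → ℝ := fun i => G (Sum.inr (Sum.inr i)) with hddef
  have hGE : G = Sum.elim (Sum.elim a bb) (Sum.elim c d) := by
    funext j
    rcases j with (i | i) | (i | i) <;> rfl
  rw [hGE] at hAG
  simp only [A0, Matrix.fromBlocks_mulVec, Sum.elim_comp_inl, Sum.elim_comp_inr,
    Matrix.fromCols_mulVec_sumElim, Matrix.neg_mulVec, Matrix.one_mulVec,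
    Matrix.zero_mulVec, add_zero, zero_add] at hAG
  have e1 : ∀ i, -(M *ᵥ a) i - bb i + c i = 0 := by
    intro i
    have := congrFun hAG (Sum.inl i)
    simpa [sub_eq_add_neg] using this
  have e2 : ∀ i, a i + d i = 0 := by
    intro i
    have := congrFun hAG (Sum.inr i)
    simpa using this
  -- support facts
  have ha_pos : ∀ i, a i ≠ 0 → 0 < x i := by
    intro i h
    by_contra hxi
    exact h (hG0 (Sum.inl (Sum.inl i)) hxi)
  have hd_lt : ∀ i, d i ≠ 0 → x i < 1 := by
    intro i h
    by_contra hxi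
    exact h (hG0 (Sum.inr (Sum.inr i)) (by simp only [sv, Sum.elim_inr]; push_neg at hxi ⊢; linarith))
  have hb_neg : ∀ i, bb i ≠ 0 → (M *ᵥ x) i < 0 := by
    intro i h
    by_contra hxi
    push_neg at hxi
    exact h (hG0 (Sum.inl (Sum.inr i)) (by
      simp only [sv, Sum.elim_inl, Sum.elim_inr]
      rw [max_eq_right (by linarith : -(M *ᵥ x) i ≤ 0)]
      exact lt_irrefl 0))
  have hc_pos : ∀ i, c i ≠ 0 → 0 < (M *ᵥ x) i := by
    intro i h
    by_contra hxi
    push_neg at hxi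
    exact h (hG0 (Sum.inr (Sum.inl i)) (by
      simp only [sv, Sum.elim_inr, Sum.elim_inl]
      rw [max_eq_right hxi]
      exact lt_irrefl 0))
  have hfrac : ∀ i, a i ≠ 0 → 0 < x i ∧ x i < 1 := by
    intro i h
    refine ⟨ha_pos i h, hd_lt i ?_⟩
    have := e2 i
    intro hdi
    rw [hdi, add_zero] at this
    exact h this
  -- a is nonzero
  have ha0 : ∃ i, a i ≠ 0 := by
    by_contra hano
    push_neg at hano
    have haz : a = 0 := funext hano
    have hdz : ∀ i, d i = 0 := fun i => by have := e2 i; rw [hano i, zero_add] at this; exact this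
    have hbc : ∀ i, c i = bb i := fun i => by
      have := e1 i
      rw [haz, Matrix.mulVec_zero] at this
      simp at this
      linarith
    have hbz : ∀ i, bb i = 0 := by
      intro i
      by_contra hbi
      have hci : c i ≠ 0 := by rw [hbc i]; exact hbi
      exact absurd (hc_pos i hci) (not_lt.mpr (le_of_lt (hb_neg i hbi)))
    have : G j0.1 ≠ 0 := by
      rw [hGpos j0.1 j0.2]
      simpa using hgj0
    apply this
    rcases j0 with ⟨(i | i) | (i | i), hj⟩
    · exact hano i
    · exact hbz i
    · rw [show G (Sum.inr (Sum.inl i)) = c i from rfl, hbc i]; exact hbz i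
    · exact hdz i
  -- KKT consequences
  have hMx0 : ∀ i, a i ≠ 0 → (M *ᵥ x) i = 0 :=
    fun i h => KFrac hx hsym i (hfrac i h).1 (hfrac i h).2
  have hMa0 : ∀ i, a i ≠ 0 → (M *ᵥ a) i = 0 := by
    intro i h
    have h0 := hMx0 i h
    have hbi : bb i = 0 := by
      by_contra hbi
      exact absurd h0 (ne_of_lt (hb_neg i hbi))
    have hci : c i = 0 := by
      by_contra hci
      exact absurd h0 (ne_of_gt (hc_pos i hci))
    have := e1 i
    rw [hbi, hci] at this
    linarith
  have hlin : a ⬝ᵥ (M *ᵥ x) = 0 :=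
    Finset.sum_eq_zero fun i _ => by
      by_cases h : a i = 0
      · rw [h, zero_mul]
      · rw [hMx0 i h, mul_zero]
  have hquad : a ⬝ᵥ (M *ᵥ a) = 0 :=
    Finset.sum_eq_zero fun i _ => by
      by_cases h : a i = 0
      · rw [h, zero_mul]
      · rw [hMa0 i h, mul_zero]
  -- move to the boundary
  set T : Finset (Fin n) := univ.filter (fun i => a i ≠ 0) with hTdef
  have hT : T.Nonempty := by
    obtain ⟨i, hi⟩ := ha0
    exact ⟨i, Finset.mem_filter.mpr ⟨Finset.mem_univ i, hi⟩⟩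
  set cap : Fin n → ℝ := fun i => if 0 < a i then (1 - x i) / a i else x i / (-a i) with hcap
  set t : ℝ := T.inf' hT cap with htdef
  have hcap_pos : ∀ i ∈ T, 0 < cap i := by
    intro i hi
    have hai : a i ≠ 0 := (Finset.mem_filter.mp hi).2
    obtain ⟨h1, h2⟩ := hfrac i hai
    by_cases hp : 0 < a i
    · simp only [hcap, if_pos hp]
      exact div_pos (by linarith) hp
    · simp only [hcap, if_neg hp]
      have : a i < 0 := lt_of_le_of_ne (not_lt.mp hp) hai
      exact div_pos h1 (by linarith)
  have htpos : 0 < t := (Finset.lt_inf'_iff hT).mpr hcap_pos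
  obtain ⟨i0, hi0T, hti0⟩ := Finset.exists_mem_eq_inf' hT cap
  have hain : ∀ i, a i ≠ 0 → i ∈ T := fun i h => Finset.mem_filter.mpr ⟨Finset.mem_univ i, h⟩
  set x' : Fin n → ℝ := x + t • a with hx'def
  have hx'app : ∀ i, x' i = x i + t * a i := fun i => rfl
  have hbound : ∀ i, a i ≠ 0 → 0 ≤ x' i ∧ x' i ≤ 1 := by
    intro i hai
    have hiT := hain i hai
    have hle : t ≤ cap i := Finset.inf'_le cap hiT
    obtain ⟨h1, h2⟩ := hfrac i hai
    rw [hx'app]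
    by_cases hp : 0 < a i
    · rw [hcap] at hle
      simp only [if_pos hp] at hle
      have : t * a i ≤ 1 - x i := by
        rw [← le_div_iff₀ hp]; exact hle
      constructor
      · nlinarith
      · linarith
    · have han : a i < 0 := lt_of_le_of_ne (not_lt.mp hp) hai
      rw [hcap] at hle
      simp only [if_neg hp] at hle
      have : t * (-a i) ≤ x i := by
        rw [← le_div_iff₀ (by linarith : 0 < -a i)]; exact hle
      constructor
      · linarith
      · nlinarith
  have hcube' : Cube x' := by
    intro i
    by_cases hai : a i = 0
    · rw [hx'app, hai, mul_zero, add_zero]; exact hx.1 i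
    · exact hbound i hai
  have hQ' : x' ⬝ᵥ M *ᵥ x' = x ⬝ᵥ M *ᵥ x := by
    rw [hx'def, qexp hsym]
    have h1 : (t • a) ⬝ᵥ (M *ᵥ x) = t * (a ⬝ᵥ (M *ᵥ x)) := smul_dotProduct t a _
    have h2 : (t • a) ⬝ᵥ M *ᵥ (t • a) = t * (t * (a ⬝ᵥ (M *ᵥ a))) := by
      rw [Matrix.mulVec_smul, smul_dotProduct, dotProduct_smul]
      rfl
    rw [h1, h2, hlin, hquad]
    ring
  have hGood' : Good M x' := ⟨hcube', fun z hz => hQ' ▸ hx.2 z hz⟩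
  refine ⟨x', hGood', Finset.card_lt_card ⟨?_, ?_⟩⟩
  · intro i hi
    rw [Frac, Finset.mem_filter] at hi ⊢
    refine ⟨Finset.mem_univ i, ?_⟩
    by_cases hai : a i = 0
    · rw [hx'app, hai, mul_zero, add_zero] at hi
      exact hi.2
    · exact hfrac i hai
  · intro hsup
    have hai0 : a i0 ≠ 0 := (Finset.mem_filter.mp hi0T).2
    have hi0in : i0 ∈ Frac x :=
      Finset.mem_filter.mpr ⟨Finset.mem_univ i0, hfrac i0 hai0⟩
    have hi0x' := (Finset.mem_filter.mp (hsup hi0in)).2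
    rw [hx'app] at hi0x'
    by_cases hp : 0 < a i0
    · have : t = (1 - x i0) / a i0 := by rw [htdef, hti0]; simp [hcap, if_pos hp]
      rw [this, div_mul_cancel₀ _ hai0] at hi0x'
      linarith [hi0x'.2]
    · have han : a i0 < 0 := lt_of_le_of_ne (not_lt.mp hp) hai0
      have : t = x i0 / (-a i0) := by rw [htdef, hti0]; simp [hcap, if_neg hp]
      rw [this] at hi0x'
      have hcalc : x i0 / (-a i0) * a i0 = -x i0 := by
        have h' : -a i0 ≠ 0 := neg_ne_zero.mpr hai0
        rw [div_mul_eq_mul_div, show x i0 * a i0 = -(x i0 * -a i0) by ring, neg_div,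
          mul_div_cancel_right₀ _ h']
      rw [hcalc] at hi0x'
      linarith [hi0x'.1]

lemma exists_good_indep (hsym : M.IsSymm) :
    ∃ x, Good M x ∧
      LinearIndependent ℝ (fun j : {j // 0 < sv M x j} => (A0 M).transpose j.1) := by
  obtain ⟨x0, hx0⟩ := exists_good (M := M)
  suffices h : ∀ (k : ℕ) (x : Fin n → ℝ), Good M x → (Frac x).card ≤ k →
      ∃ x', Good M x' ∧
        LinearIndependent ℝ (fun j : {j // 0 < sv M x' j} => (A0 M).transpose j.1) by
    exact h (Frac x0).card x0 hx0 le_rfl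
  intro k
  induction k with
  | zero =>
    intro x hx hc
    rcases indep_or_descend hx hsym with h | ⟨x', _, hlt⟩
    · exact ⟨x, hx, h⟩
    · omega
  | succ k ih =>
    intro x hx hc
    rcases indep_or_descend hx hsym with h | ⟨x', hx', hlt⟩
    · exact ⟨x, hx, h⟩
    · exact ih x' hx' (by omega)

end Stmt3Aux

open Stmt3Aux in
theorem stmt3 {n : ℕ} (M : Matrix (Fin n) (Fin n) ℝ) (hsym : M.IsSymm)
    (A : Matrix (Fin n ⊕ Fin n) ((Fin n ⊕ Fin n) ⊕ (Fin n ⊕ Fin n)) ℝ)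
    (hA : A = Matrix.fromBlocks
      (Matrix.fromCols (-M) (-(1 : Matrix (Fin n) (Fin n) ℝ)))
      (Matrix.fromCols (1 : Matrix (Fin n) (Fin n) ℝ) 0)
      (Matrix.fromCols (1 : Matrix (Fin n) (Fin n) ℝ) 0)
      (Matrix.fromCols 0 (1 : Matrix (Fin n) (Fin n) ℝ)))
    (b : Fin n ⊕ Fin n → ℝ)
    (hb : b = Sum.elim (fun _ => 0) (fun _ => 1)) :
    ∃ (xb yb ub vb : Fin n → ℝ)
      (s : (Fin n ⊕ Fin n) ⊕ (Fin n ⊕ Fin n) → ℝ),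
      s = Sum.elim (Sum.elim xb yb) (Sum.elim ub vb) ∧
      A *ᵥ s = b ∧
      (∀ j, 0 ≤ s j) ∧
      LinearIndependent ℝ (fun j : {j // 0 < s j} => A.transpose j.1) ∧
      ub ⬝ᵥ xb + vb ⬝ᵥ yb = 0 ∧
      (∀ i, xb i ∈ Set.Icc (0 : ℝ) 1) ∧
      (∀ x : Fin n → ℝ, (∀ i, x i ∈ Set.Icc (0 : ℝ) 1) →
        xb ⬝ᵥ M *ᵥ xb ≤ x ⬝ᵥ M *ᵥ x) := by
  subst hA hb
  obtain ⟨x, hx, hli⟩ := exists_good_indep (M := M) hsym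
  refine ⟨x, fun i => max (-((M *ᵥ x) i)) 0, fun i => max ((M *ᵥ x) i) 0,
    fun i => 1 - x i, sv M x, rfl, ?_, ?_, ?_, ?_, ?_, ?_⟩
  · -- feasibility
    show A0 M *ᵥ sv M x = _
    rw [show sv M x = Sum.elim (Sum.elim x (fun i => max (-((M *ᵥ x) i)) 0))
        (Sum.elim (fun i => max ((M *ᵥ x) i) 0) (fun i => 1 - x i)) from rfl]
    simp only [A0, Matrix.fromBlocks_mulVec, Sum.elim_comp_inl, Sum.elim_comp_inr,
      Matrix.fromCols_mulVec_sumElim, Matrix.neg_mulVec, Matrix.one_mulVec,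
      Matrix.zero_mulVec, add_zero, zero_add]
    funext r
    rcases r with i | i
    · show -(M *ᵥ x) i + -(max (-((M *ᵥ x) i)) 0) + max ((M *ᵥ x) i) 0 = 0
      rcases le_total ((M *ᵥ x) i) 0 with h | h
      · rw [max_eq_right h, max_eq_left (by linarith)]
        ring
      · rw [max_eq_left h, max_eq_right (by linarith)]
        ring
    · show x i + (1 - x i) = 1
      ring
  · -- nonnegativity
    intro j
    rcases j with (i | i) | (i | i)
    · exact (hx.1 i).1
    · exact le_max_right _ _
    · exact le_max_right _ _
    · have := (hx.1 i).2
      show (0:ℝ) ≤ 1 - x i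
      linarith
  · exact hli
  · -- complementarity
    have h1 : (fun i => max ((M *ᵥ x) i) 0) ⬝ᵥ x = 0 :=
      Finset.sum_eq_zero fun i _ => by
        show max ((M *ᵥ x) i) 0 * x i = 0
        by_cases hp : 0 < x i
        · rw [max_eq_right (K1 hx hsym i hp), zero_mul]
        · rw [show x i = 0 from le_antisymm (not_lt.mp hp) (hx.1 i).1, mul_zero]
    have h2 : (fun i => 1 - x i) ⬝ᵥ (fun i => max (-((M *ᵥ x) i)) 0) = 0 :=
      Finset.sum_eq_zero fun i _ => by
        show (1 - x i) * max (-((M *ᵥ x) i)) 0 = 0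
        by_cases hp : x i < 1
        · rw [max_eq_right (by linarith [K2 hx hsym i hp] : -((M *ᵥ x) i) ≤ 0), mul_zero]
        · rw [show (1:ℝ) - x i = 0 from by
            have := (hx.1 i).2; push_neg at hp; linarith, zero_mul]
    rw [h1, h2, add_zero]
  · exact hx.1
  · exact fun z hz => hx.2 z hz
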